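/- arXiv:0911.5515 — 2 statements merged into one kernel-verified Lean document; each statement's English description precedes it below -/
import Mathlib

section
/- Let p be a positive integer and let π = (ρ1, ρ2, q) be a partial permutation of {1,…,p}, with deterministic set 𝒟 = {2j−1 : j ∉ ρ2} ∪ {2j : j ∉ ρ1} ⊆ ℤ/2p and associated equivalence relation σ(π) on 𝒟. Then every equivalence class of σ(π) has even cardinality. -/
open Relation

noncomputable section

instance pequivFintype {α β : Type*} [DecidableEq α] [Fintype α] [DecidableEq β] [Fintype β] :
    Fintype (α ≃. β) :=
  Fintype.ofInjective (fun f => (f : α → Option β)) fun _ _ h => PEquiv.ext (congrFun h)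

/-- The generating relation for `ρ(π)` on `ℤ/2p` for a partial permutation `π` of `{1,…,p}`
(modelled as a partial equivalence `Fin p ≃. Fin p`, with `j : Fin p` standing for
`j+1 ∈ {1,…,p}`): `2j ∼ 2π(j)` and `2j+1 ∼ 2π(j) − 1` for `j` in the domain of `π`. -/
def ppRel (p : ℕ) (π : Fin p ≃. Fin p) : ZMod (2 * p) → ZMod (2 * p) → Prop :=
  fun a b => ∃ j m : Fin p, π j = some m ∧
    ((a = ((2 * (j.val + 1) : ℕ) : ZMod (2 * p)) ∧
      b = ((2 * (m.val + 1) : ℕ) : ZMod (2 * p)))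
     ∨
     (a = ((2 * (j.val + 1) + 1 : ℕ) : ZMod (2 * p)) ∧
      b = ((2 * (m.val + 1) : ℕ) : ZMod (2 * p)) - 1))

/-- The equivalence classes of `ρ(π)`. -/
def ppClasses (p : ℕ) (π : Fin p ≃. Fin p) : Set (Set (ZMod (2 * p))) :=
  (EqvGen.setoid (ppRel p π)).classes

/-- The classes of `ρ(π)` consisting of even residues. -/
def ppEvenClasses (p : ℕ) (π : Fin p ≃. Fin p) : Set (Set (ZMod (2 * p))) :=
  {C ∈ ppClasses p π | ∀ x ∈ C, Even x.val}

/-- The classes of `ρ(π)` consisting of odd residues. -/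
def ppOddClasses (p : ℕ) (π : Fin p ≃. Fin p) : Set (Set (ZMod (2 * p))) :=
  {C ∈ ppClasses p π | ∀ x ∈ C, Odd x.val}

/-- `k(ρ(π))`: the number of even classes. -/
def ppK (p : ℕ) (π : Fin p ≃. Fin p) : ℕ := (ppEvenClasses p π).ncard

/-- `l(ρ(π))`: the number of odd classes. -/
def ppL (p : ℕ) (π : Fin p ≃. Fin p) : ℕ := (ppOddClasses p π).ncard

/-- The deterministic set `𝒟 = {2j−1 : j ∉ ρ2} ∪ {2j : j ∉ ρ1} ⊆ ℤ/2p`, where `ρ1` is the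
domain and `ρ2` the range of `π`. -/
def ppDet (p : ℕ) (π : Fin p ≃. Fin p) : Set (ZMod (2 * p)) :=
  {x | (∃ j : Fin p, π.symm j = none ∧
          x = ((2 * (j.val + 1) : ℕ) : ZMod (2 * p)) - 1) ∨
       (∃ j : Fin p, π j = none ∧
          x = ((2 * (j.val + 1) : ℕ) : ZMod (2 * p)))}

/-- The generating relation for `σ(π)` on `𝒟`: `k ∼ k+1` whenever both lie in `𝒟` and
`k ∼ l` whenever `k+1 ∼_{ρ(π)} l`. -/
def ppSigmaRel (p : ℕ) (π : Fin p ≃. Fin p) : ppDet p π → ppDet p π → Prop :=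
  fun a b => ((b : ZMod (2 * p)) = (a : ZMod (2 * p)) + 1) ∨
    EqvGen (ppRel p π) ((a : ZMod (2 * p)) + 1) (b : ZMod (2 * p))

/-- The equivalence classes of `σ(π)`. -/
def ppSigmaClasses (p : ℕ) (π : Fin p ≃. Fin p) : Set (Set (ppDet p π)) :=
  (EqvGen.setoid (ppSigmaRel p π)).classes

/-- `|σ(π)|`: the number of classes of `σ(π)`. -/
def ppSigmaCount (p : ℕ) (π : Fin p ≃. Fin p) : ℕ := (ppSigmaClasses p π).ncard

/-- `𝒟 ∪ (𝒟 + 1)`. -/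
def ppDetPlus (p : ℕ) (π : Fin p ≃. Fin p) : Set (ZMod (2 * p)) :=
  ppDet p π ∪ ((· + 1) '' ppDet p π)

/-- `kd(ρ(π))`: the number of even classes of `ρ(π)` meeting `𝒟 ∪ (𝒟+1)`. -/
def ppKd (p : ℕ) (π : Fin p ≃. Fin p) : ℕ :=
  {C ∈ ppEvenClasses p π | (C ∩ ppDetPlus p π).Nonempty}.ncard

/-- `ld(ρ(π))`: the number of odd classes of `ρ(π)` meeting `𝒟 ∪ (𝒟+1)`. -/
def ppLd (p : ℕ) (π : Fin p ≃. Fin p) : ℕ :=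
  {C ∈ ppOddClasses p π | (C ∩ ppDetPlus p π).Nonempty}.ncard

/-- `|ρ1|`: the cardinality of the domain of `π`. -/
def ppRho1Card (p : ℕ) (π : Fin p ≃. Fin p) : ℕ :=
  {j : Fin p | (π j).isSome}.ncard



section Abstract
variable {α : Type*}

def pIter (f : α → Option α) : ℕ → α → Option α
  | 0, x => some x
  | n+1, x => (pIter f n x).bind f

lemma pIter_zero (f : α → Option α) (x : α) : pIter f 0 x = some x := rfl
lemma pIter_succ (f : α → Option α) (n : ℕ) (x : α) :
    pIter f (n+1) x = (pIter f n x).bind f := rfl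

lemma pIter_add (f : α → Option α) (m n : ℕ) (x : α) :
    pIter f (m + n) x = (pIter f m x).bind (pIter f n) := by
  induction n with
  | zero =>
      show pIter f m x = (pIter f m x).bind (pIter f 0)
      cases pIter f m x <;> rfl
  | succ n ih =>
      rw [show m + (n+1) = (m+n)+1 from rfl, pIter_succ, ih]
      cases pIter f m x <;> simp [pIter_succ]

variable {f g : α → Option α}

lemma pinj (hfg : ∀ a b, f a = some b ↔ g b = some a) :
    ∀ {a b c}, f a = some c → f b = some c → a = b := by
  intro a b c h1 h2
  rw [hfg] at h1 h2
  rw [h1] at h2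
  exact Option.some_injective _ h2

lemma pIter_inj (hfg : ∀ a b, f a = some b ↔ g b = some a) :
    ∀ {n a b c}, pIter f n a = some c → pIter f n b = some c → a = b := by
  intro n
  induction n with
  | zero => intro a b c h1 h2; rw [pIter_zero] at h1 h2; rw [← Option.some_inj, h1, h2]
  | succ n ih =>
      intro a b c h1 h2
      rw [pIter_succ] at h1 h2
      obtain ⟨a', ha, ha'⟩ := Option.bind_eq_some_iff.1 h1
      obtain ⟨b', hb, hb'⟩ := Option.bind_eq_some_iff.1 h2
      have : a' = b' := pinj hfg ha' hb'
      exact ih ha (this ▸ hb)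

lemma comp_of_eqvGen (hfg : ∀ a b, f a = some b ↔ g b = some a) {x y : α}
    (h : EqvGen (fun a b => f a = some b) x y) :
    (∃ n, pIter f n x = some y) ∨ (∃ n, pIter f n y = some x) := by
  induction h with
  | rel a b hab => exact Or.inl ⟨1, by simp [pIter_succ, pIter_zero, hab]⟩
  | refl a => exact Or.inl ⟨0, rfl⟩
  | symm a b _ ih => exact ih.symm
  | trans a b c _ _ ih1 ih2 =>
      rcases ih1 with ⟨m, hm⟩ | ⟨m, hm⟩ <;> rcases ih2 with ⟨n, hn⟩ | ⟨n, hn⟩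
      · exact Or.inl ⟨m + n, by rw [pIter_add, hm, Option.bind_some, hn]⟩
      · -- pIter m a = some b, pIter n c = some b
        rcases le_total m n with hle | hle
        · right
          have : pIter f ((n - m) + m) c = some b := by rwa [Nat.sub_add_cancel hle]
          rw [pIter_add] at this
          obtain ⟨w, hw, hw'⟩ := Option.bind_eq_some_iff.1 this
          have : w = a := pIter_inj hfg hw' hm
          exact ⟨n - m, this ▸ hw⟩
        · left
          have : pIter f ((m - n) + n) a = some b := by rwa [Nat.sub_add_cancel hle]
          rw [pIter_add] at this
          obtain ⟨w, hw, hw'⟩ := Option.bind_eq_some_iff.1 this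
          have : w = c := pIter_inj hfg hw' hn
          exact ⟨m - n, this ▸ hw⟩
      · -- pIter m b = some a, pIter n b = some c
        rcases le_total m n with hle | hle
        · left
          have : pIter f (m + (n - m)) b = some c := by rwa [Nat.add_sub_cancel' hle]
          rw [pIter_add, hm, Option.bind_some] at this
          exact ⟨n - m, this⟩
        · right
          have : pIter f (n + (m - n)) b = some a := by rwa [Nat.add_sub_cancel' hle]
          rw [pIter_add, hn, Option.bind_some] at this
          exact ⟨m - n, this⟩
      · exact Or.inr ⟨n + m, by rw [pIter_add, hn, Option.bind_some, hm]⟩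

lemma sink_fix {x : α} (hx : f x = none) :
    ∀ {n y}, pIter f n x = some y → y = x := by
  intro n
  induction n with
  | zero => intro y h; exact (Option.some_inj.1 h).symm
  | succ n ih =>
      intro y h
      rw [pIter_succ] at h
      obtain ⟨w, hw, hw'⟩ := Option.bind_eq_some_iff.1 h
      rw [ih hw, hx] at hw'
      exact absurd hw' (by simp)

lemma sink_unique (hfg : ∀ a b, f a = some b ↔ g b = some a) {x y : α}
    (hx : f x = none) (hy : f y = none)
    (h : EqvGen (fun a b => f a = some b) x y) : x = y := by
  rcases comp_of_eqvGen hfg h with ⟨n, hn⟩ | ⟨n, hn⟩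
  · exact (sink_fix hx hn).symm
  · exact sink_fix hy hn

lemma reach_eqvGen {n : ℕ} {x y : α} (h : pIter f n x = some y) :
    EqvGen (fun a b => f a = some b) x y := by
  induction n generalizing y with
  | zero => rw [pIter_zero] at h; exact Option.some_inj.1 h ▸ EqvGen.refl x
  | succ n ih =>
      rw [pIter_succ] at h
      obtain ⟨w, hw, hw'⟩ := Option.bind_eq_some_iff.1 h
      exact EqvGen.trans _ _ _ (ih hw) (EqvGen.rel _ _ hw')

lemma pIter_periodic {d : ℕ} {w : α} (h : pIter f d w = some w) :
    ∀ k, pIter f (k * d) w = some w := by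
  intro k
  induction k with
  | zero => rw [Nat.zero_mul]; rfl
  | succ k ih =>
      rw [show (k+1) * d = k * d + d by ring, pIter_add, ih, Option.bind_some]
      exact h

lemma pIter_dead {x w : α} (hx : f x = none) {m : ℕ} (h : pIter f m w = some x) :
    ∀ t, pIter f (m + 1 + t) w = none := by
  intro t
  rw [show m + 1 + t = m + (1 + t) by ring, pIter_add, h, Option.bind_some,
    show 1 + t = 0 + 1 + t by ring]
  have h1 : pIter f (0 + 1) x = none := by rw [pIter_succ, pIter_zero, Option.bind_some, hx]
  rw [show (0:ℕ) + 1 + t = (0+1) + t by ring, pIter_add, h1, Option.bind_none]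

lemma chain_bound [Fintype α] (hfg : ∀ a b, f a = some b ↔ g b = some a)
    {n : ℕ} {y x : α} (hx : f x = none) (h : pIter f n y = some x) :
    n < Fintype.card α := by
  by_contra hn
  push_neg at hn
  -- build injective chain Fin (n+1) → α
  have hsome : ∀ i : ℕ, i ≤ n → ∃ w, pIter f i y = some w := by
    intro i hi
    have : pIter f (i + (n - i)) y = some x := by rwa [Nat.add_sub_cancel' hi]
    rw [pIter_add] at this
    obtain ⟨w, hw, -⟩ := Option.bind_eq_some_iff.1 this
    exact ⟨w, hw⟩
  choose c hc using fun i : Fin (n+1) => hsome i.val (Nat.lt_succ_iff.1 i.isLt)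
  have hinj : Function.Injective c := by
    intro i j hij
    by_contra hne
    wlog hlt : i < j generalizing i j
    · exact this hij.symm (Ne.symm hne) (lt_of_le_of_ne (not_lt.1 hlt) (Ne.symm hne))
    -- pIter i y = some (c i), pIter j y = some (c i)
    have hci := hc i
    have hcj := hc j
    rw [← hij] at hcj
    set w := c i with hw
    have hji : (j:ℕ) = i + ((j:ℕ) - i) := (Nat.add_sub_cancel' hlt.le).symm
    have hper : pIter f ((j:ℕ) - i) w = some w := by
      have := hcj
      rw [hji, pIter_add, hci, Option.bind_some] at this
      exact this
    have hreach : pIter f (n - i) w = some x := by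
      have : pIter f ((i:ℕ) + (n - i)) y = some x := by
        rwa [Nat.add_sub_cancel' (Nat.lt_succ_iff.1 i.isLt)]
      rw [pIter_add, hci, Option.bind_some] at this
      exact this
    have hd1 : 1 ≤ (j:ℕ) - i := by omega
    -- choose k with k * d ≥ n - i + 1
    set d := (j:ℕ) - i with hdd
    have hbig : (n - i + 1) * d ≥ n - i + 1 := Nat.le_mul_of_pos_right _ (by omega)
    have h1 : pIter f ((n - i + 1) * d) w = some w := pIter_periodic hper _
    have h2 : pIter f ((n - i + 1) * d) w = none := by
      have := pIter_dead hx hreach ((n - i + 1) * d - (n - i + 1))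
      rwa [show n - i + 1 + ((n - i + 1) * d - (n - i + 1)) = (n - i + 1) * d by omega] at this
    rw [h1] at h2
    exact absurd h2 (by simp)
  have := Fintype.card_le_of_injective c hinj
  simp at this
  omega

lemma exists_source [Fintype α] (hfg : ∀ a b, f a = some b ↔ g b = some a)
    {x : α} (hx : f x = none) :
    ∃ y, g y = none ∧ EqvGen (fun a b => f a = some b) x y := by
  classical
  let T : Finset ℕ := (Finset.range (Fintype.card α + 1)).filter
    (fun n => ∃ y, pIter f n y = some x)
  have h0 : 0 ∈ T := by
    simp only [T, Finset.mem_filter, Finset.mem_range]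
    exact ⟨by omega, x, rfl⟩
  set N := T.max' ⟨0, h0⟩ with hN
  have hNmem : N ∈ T := T.max'_mem _
  simp only [T, Finset.mem_filter, Finset.mem_range] at hNmem
  obtain ⟨-, y, hy⟩ := hNmem
  refine ⟨y, ?_, EqvGen.symm _ _ (reach_eqvGen hy)⟩
  by_contra hg
  obtain ⟨z, hz⟩ := Option.ne_none_iff_exists'.1 hg
  have hfz : f z = some y := (hfg z y).2 hz
  have hreach : pIter f (N + 1) z = some x := by
    rw [show N + 1 = 1 + N by ring, pIter_add, pIter_succ, pIter_zero, Option.bind_some, hfz,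
      Option.bind_some]
    exact hy
  have hmem : N + 1 ∈ T := by
    simp only [T, Finset.mem_filter, Finset.mem_range]
    exact ⟨by have := chain_bound hfg hx hreach; omega, z, hreach⟩
  have := T.le_max' _ hmem
  omega

lemma eqvGen_inv' : True := trivial

lemma eqvGen_swap {r : α → α → Prop} {x y : α} (h : EqvGen r x y) :
    EqvGen (fun a b => r b a) x y := by
  induction h with
  | rel a b hab => exact EqvGen.symm _ _ (EqvGen.rel b a hab)
  | refl a => exact EqvGen.refl a
  | symm a b _ ih => exact EqvGen.symm _ _ ih
  | trans a b c _ _ ih1 ih2 => exact EqvGen.trans _ _ _ ih1 ih2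

lemma eqvGen_inv (hfg : ∀ a b, f a = some b ↔ g b = some a) {x y : α}
    (h : EqvGen (fun a b => f a = some b) x y) :
    EqvGen (fun a b => g a = some b) x y :=
  EqvGen.mono (fun a b hab => (hfg b a).1 hab) _ _ (eqvGen_swap h)

end Abstract

section PP
variable {p : ℕ} [NeZero p]

instance : NeZero (2 * p) := ⟨by have := Nat.pos_of_ne_zero (NeZero.ne p); omega⟩

def evenEmb (j : Fin p) : ZMod (2 * p) := ((2 * (j.val + 1) : ℕ) : ZMod (2 * p))
def oddEmb (j : Fin p) : ZMod (2 * p) := ((2 * (j.val + 1) : ℕ) : ZMod (2 * p)) - 1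

lemma oddEmb_eq_cast (j : Fin p) : oddEmb j = ((2 * j.val + 1 : ℕ) : ZMod (2 * p)) := by
  unfold oddEmb
  rw [show (2 * (j.val + 1) : ℕ) = (2 * j.val + 1) + 1 by ring]
  push_cast
  ring

lemma oddEmb_val (j : Fin p) : (oddEmb j).val = 2 * j.val + 1 := by
  rw [oddEmb_eq_cast, ZMod.val_natCast,
    Nat.mod_eq_of_lt (by have := j.isLt; omega)]

lemma evenEmb_val (j : Fin p) :
    (evenEmb j).val = if j.val + 1 = p then 0 else 2 * (j.val + 1) := by
  unfold evenEmb
  rw [ZMod.val_natCast]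
  split_ifs with h
  · rw [h]; exact Nat.mod_self _
  · exact Nat.mod_eq_of_lt (by have := j.isLt; omega)

lemma evenEmb_val_even (j : Fin p) : (evenEmb j).val % 2 = 0 := by
  rw [evenEmb_val]; split_ifs <;> omega

lemma oddEmb_val_odd (j : Fin p) : (oddEmb j).val % 2 = 1 := by
  rw [oddEmb_val]; omega

lemma evenEmb_inj {j m : Fin p} (h : evenEmb j = evenEmb m) : j = m := by
  have hj := j.isLt; have hm := m.isLt
  have hv := congrArg ZMod.val h
  rw [evenEmb_val, evenEmb_val] at hv
  apply Fin.ext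
  split_ifs at hv <;> omega

lemma oddEmb_inj {j m : Fin p} (h : oddEmb j = oddEmb m) : j = m := by
  have hv := congrArg ZMod.val h
  rw [oddEmb_val, oddEmb_val] at hv
  exact Fin.ext (by omega)

lemma evenEmb_ne_oddEmb (j m : Fin p) : evenEmb j ≠ oddEmb m := by
  intro h
  have := congrArg ZMod.val h
  rw [evenEmb_val, oddEmb_val] at this
  split_ifs at this <;> omega

lemma fin_add_one_val (j : Fin p) : ((j + 1 : Fin p)).val = (j.val + 1) % p := by
  rw [Fin.add_def, Fin.val_one']; exact Nat.add_mod_mod _ _ _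

lemma oddEmb_add_one (j : Fin p) : oddEmb j + 1 = evenEmb j := by
  unfold oddEmb evenEmb; ring

lemma evenEmb_add_one (j : Fin p) : evenEmb j + 1 = oddEmb (j + 1) := by
  rw [oddEmb_eq_cast, fin_add_one_val]
  unfold evenEmb
  rcases Nat.lt_or_ge (j.val + 1) p with h | h
  · rw [Nat.mod_eq_of_lt h]; push_cast; ring
  · have hp : j.val + 1 = p := by have := j.isLt; omega
    rw [hp, Nat.mod_self, show (2 * 0 + 1 : ℕ) = 1 by norm_num, ZMod.natCast_self]
    norm_num

lemma cast_odd_succ (j : Fin p) :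
    ((2 * (j.val + 1) + 1 : ℕ) : ZMod (2 * p)) = oddEmb (j + 1) := by
  rw [← evenEmb_add_one]; unfold evenEmb; push_cast; ring

lemma cast_val_mod_two (k : ℕ) : ((k : ZMod (2 * p))).val % 2 = k % 2 := by
  rw [ZMod.val_natCast]; exact Nat.mod_mod_of_dvd k ⟨p, rfl⟩

lemma val_add_one_mod_two (x : ZMod (2 * p)) :
    ((x + 1).val) % 2 = (x.val + 1) % 2 := by
  have hx : ((x.val : ℕ) : ZMod (2 * p)) = x := ZMod.natCast_rightInverse x
  have h1 : x + 1 = (((x.val + 1 : ℕ)) : ZMod (2 * p)) := by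
    rw [Nat.cast_add, Nat.cast_one, hx]
  rw [h1, cast_val_mod_two]

variable (π : Fin p ≃. Fin p)

def rE : Fin p → Fin p → Prop := fun j m => π j = some m
def rO : Fin p → Fin p → Prop := fun v m => π (v - 1) = some m

lemma hfgE : ∀ a b : Fin p, π a = some b ↔ π.symm b = some a := by
  intro a b; rw [← Option.mem_def, ← Option.mem_def, PEquiv.mem_iff_mem]

lemma hfgO : ∀ a b : Fin p, π (a - 1) = some b ↔ (π.symm b).map (· + 1) = some a := by
  intro a b
  rw [hfgE π (a - 1) b, Option.map_eq_some_iff]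
  constructor
  · intro h; exact ⟨a - 1, h, sub_add_cancel a 1⟩
  · rintro ⟨u, hu, rfl⟩; rwa [add_sub_cancel_right]

lemma transport {x y : ZMod (2 * p)} (h : EqvGen (ppRel p π) x y) :
    ((∀ j, x = evenEmb j → ∃ m, y = evenEmb m ∧ EqvGen (rE π) j m) ∧
     (∀ v, x = oddEmb v → ∃ m, y = oddEmb m ∧ EqvGen (rO π) v m)) ∧
    ((∀ j, y = evenEmb j → ∃ m, x = evenEmb m ∧ EqvGen (rE π) j m) ∧
     (∀ v, y = oddEmb v → ∃ m, x = oddEmb m ∧ EqvGen (rO π) v m)) := by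
  induction h with
  | rel a b hab =>
      obtain ⟨j0, m0, hπ, hc⟩ := hab
      rcases hc with ⟨ha, hb⟩ | ⟨ha, hb⟩
      · have ha' : a = evenEmb j0 := ha
        have hb' : b = evenEmb m0 := hb
        refine ⟨⟨?_, ?_⟩, ?_, ?_⟩
        · intro j hj
          rw [hj] at ha'
          rw [evenEmb_inj ha']
          exact ⟨m0, hb', EqvGen.rel _ _ hπ⟩
        · intro v hv
          rw [hv] at ha'
          exact absurd ha'.symm (evenEmb_ne_oddEmb j0 v)
        · intro j hj
          rw [hj] at hb'
          rw [evenEmb_inj hb']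
          exact ⟨j0, ha', EqvGen.symm _ _ (EqvGen.rel _ _ hπ)⟩
        · intro v hv
          rw [hv] at hb'
          exact absurd hb'.symm (evenEmb_ne_oddEmb m0 v)
      · have ha' : a = oddEmb (j0 + 1) := by rw [ha, cast_odd_succ]
        have hb' : b = oddEmb m0 := hb
        have hrel : rO π (j0 + 1) m0 := by
          unfold rO; rwa [add_sub_cancel_right]
        refine ⟨⟨?_, ?_⟩, ?_, ?_⟩
        · intro j hj
          rw [hj] at ha'
          exact absurd ha' (evenEmb_ne_oddEmb j (j0 + 1))
        · intro v hv
          rw [hv] at ha'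
          rw [oddEmb_inj ha']
          exact ⟨m0, hb', EqvGen.rel _ _ hrel⟩
        · intro j hj
          rw [hj] at hb'
          exact absurd hb' (evenEmb_ne_oddEmb j m0)
        · intro v hv
          rw [hv] at hb'
          rw [oddEmb_inj hb']
          exact ⟨j0 + 1, ha', EqvGen.symm _ _ (EqvGen.rel _ _ hrel)⟩
  | refl a =>
      exact ⟨⟨fun j hj => ⟨j, hj, EqvGen.refl j⟩, fun v hv => ⟨v, hv, EqvGen.refl v⟩⟩,
        fun j hj => ⟨j, hj, EqvGen.refl j⟩, fun v hv => ⟨v, hv, EqvGen.refl v⟩⟩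
  | symm a b _ ih => exact ⟨ih.2, ih.1⟩
  | trans a b c _ _ ih1 ih2 =>
      refine ⟨⟨?_, ?_⟩, ?_, ?_⟩
      · intro j hj
        obtain ⟨m, hm, hE⟩ := ih1.1.1 j hj
        obtain ⟨m', hm', hE'⟩ := ih2.1.1 m hm
        exact ⟨m', hm', EqvGen.trans _ _ _ hE hE'⟩
      · intro v hv
        obtain ⟨m, hm, hE⟩ := ih1.1.2 v hv
        obtain ⟨m', hm', hE'⟩ := ih2.1.2 m hm
        exact ⟨m', hm', EqvGen.trans _ _ _ hE hE'⟩
      · intro j hj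
        obtain ⟨m, hm, hE⟩ := ih2.2.1 j hj
        obtain ⟨m', hm', hE'⟩ := ih1.2.1 m hm
        exact ⟨m', hm', EqvGen.trans _ _ _ hE hE'⟩
      · intro v hv
        obtain ⟨m, hm, hE⟩ := ih2.2.2 v hv
        obtain ⟨m', hm', hE'⟩ := ih1.2.2 m hm
        exact ⟨m', hm', EqvGen.trans _ _ _ hE hE'⟩

lemma rE_to_pp {j m : Fin p} (h : EqvGen (rE π) j m) :
    EqvGen (ppRel p π) (evenEmb j) (evenEmb m) := by
  induction h with
  | rel a b hab => exact EqvGen.rel _ _ ⟨a, b, hab, Or.inl ⟨rfl, rfl⟩⟩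
  | refl a => exact EqvGen.refl _
  | symm a b _ ih => exact EqvGen.symm _ _ ih
  | trans a b c _ _ ih1 ih2 => exact EqvGen.trans _ _ _ ih1 ih2

lemma rO_to_pp {v m : Fin p} (h : EqvGen (rO π) v m) :
    EqvGen (ppRel p π) (oddEmb v) (oddEmb m) := by
  induction h with
  | rel a b hab =>
      refine EqvGen.rel _ _ ⟨a - 1, b, hab, Or.inr ⟨?_, rfl⟩⟩
      rw [cast_odd_succ, sub_add_cancel]
  | refl a => exact EqvGen.refl _
  | symm a b _ ih => exact EqvGen.symm _ _ ih
  | trans a b c _ _ ih1 ih2 => exact EqvGen.trans _ _ _ ih1 ih2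

lemma ppRel_parity {x y : ZMod (2 * p)} (h : ppRel p π x y) : x.val % 2 = y.val % 2 := by
  obtain ⟨j, m, _, hc⟩ := h
  rcases hc with ⟨ha, hb⟩ | ⟨ha, hb⟩
  · rw [ha, hb, cast_val_mod_two, cast_val_mod_two]; omega
  · have hb' : y = oddEmb m := hb
    rw [ha, hb', cast_val_mod_two, oddEmb_val_odd]; omega


variable {π}

def Det (π : Fin p ≃. Fin p) (x : ZMod (2 * p)) : Prop :=
  (∃ j, π.symm j = none ∧ x = oddEmb j) ∨ (∃ j, π j = none ∧ x = evenEmb j)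

lemma mem_ppDet {π : Fin p ≃. Fin p} {x : ZMod (2 * p)} : x ∈ ppDet p π ↔ Det π x := Iff.rfl

lemma gO_none {π : Fin p ≃. Fin p} {m : Fin p} (h : π.symm m = none) :
    (π.symm m).map (· + 1) = none := by rw [h]; rfl

lemma gO_none' {π : Fin p ≃. Fin p} {m : Fin p} (h : (π.symm m).map (· + 1) = none) :
    π.symm m = none := by
  rcases hh : π.symm m with _ | u
  · rfl
  · rw [hh] at h; simp at h

lemma KE {π : Fin p ≃. Fin p} {a : ZMod (2 * p)} (ha : Det π a) :
    ∃ b, Det π b ∧ EqvGen (ppRel p π) (a + 1) b := by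
  rcases ha with ⟨j, hj, rfl⟩ | ⟨j, hj, rfl⟩
  · obtain ⟨y, hy, hE⟩ := exists_source (f := fun u => π.symm u) (g := fun u => π u)
      (fun u v => (hfgE π v u).symm) (x := j) hj
    have hE' : EqvGen (rE π) j y :=
      eqvGen_inv (f := fun u => π.symm u) (g := fun u => π u)
        (fun u v => (hfgE π v u).symm) hE
    refine ⟨evenEmb y, Or.inr ⟨y, hy, rfl⟩, ?_⟩
    rw [oddEmb_add_one]
    exact rE_to_pp π hE'
  · have hsink : π ((j + 1) - 1) = none := by rwa [add_sub_cancel_right]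
    obtain ⟨y, hy, hE⟩ := exists_source (f := fun v => π (v - 1))
      (g := fun m => (π.symm m).map (· + 1)) (hfgO π) (x := j + 1) hsink
    refine ⟨oddEmb y, Or.inl ⟨y, gO_none' hy, rfl⟩, ?_⟩
    rw [evenEmb_add_one]
    exact rO_to_pp π hE

lemma KU {π : Fin p ≃. Fin p} {a b b' : ZMod (2 * p)} (ha : Det π a) (hb : Det π b)
    (hb' : Det π b') (h : EqvGen (ppRel p π) (a + 1) b)
    (h' : EqvGen (ppRel p π) (a + 1) b') : b = b' := by
  rcases ha with ⟨j, hj, rfl⟩ | ⟨j, hj, rfl⟩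
  · rw [oddEmb_add_one] at h h'
    obtain ⟨m, hbm, hEm⟩ := (transport π h).1.1 j rfl
    obtain ⟨m', hbm', hEm'⟩ := (transport π h').1.1 j rfl
    have hm : π m = none := by
      rcases hb with ⟨w, hw, hbw⟩ | ⟨w, hw, hbw⟩
      · rw [hbm] at hbw; exact absurd hbw (evenEmb_ne_oddEmb m w)
      · rw [hbm] at hbw; rw [evenEmb_inj hbw]; exact hw
    have hm' : π m' = none := by
      rcases hb' with ⟨w, hw, hbw⟩ | ⟨w, hw, hbw⟩
      · rw [hbm'] at hbw; exact absurd hbw (evenEmb_ne_oddEmb m' w)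
      · rw [hbm'] at hbw; rw [evenEmb_inj hbw]; exact hw
    have hconn : EqvGen (rE π) m m' := EqvGen.trans _ _ _ (EqvGen.symm _ _ hEm) hEm'
    have := sink_unique (f := fun u => π u) (g := fun u => π.symm u) (hfgE π) hm hm' hconn
    rw [hbm, hbm', this]
  · rw [evenEmb_add_one] at h h'
    obtain ⟨m, hbm, hEm⟩ := (transport π h).1.2 (j + 1) rfl
    obtain ⟨m', hbm', hEm'⟩ := (transport π h').1.2 (j + 1) rfl
    have hm : π.symm m = none := by
      rcases hb with ⟨w, hw, hbw⟩ | ⟨w, hw, hbw⟩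
      · rw [hbm] at hbw; rw [oddEmb_inj hbw]; exact hw
      · rw [hbm] at hbw; exact absurd hbw.symm (evenEmb_ne_oddEmb w m)
    have hm' : π.symm m' = none := by
      rcases hb' with ⟨w, hw, hbw⟩ | ⟨w, hw, hbw⟩
      · rw [hbm'] at hbw; rw [oddEmb_inj hbw]; exact hw
      · rw [hbm'] at hbw; exact absurd hbw.symm (evenEmb_ne_oddEmb w m')
    have hconn : EqvGen (rO π) m m' := EqvGen.trans _ _ _ (EqvGen.symm _ _ hEm) hEm'
    have hconn' : EqvGen (fun u v => (π.symm u).map (· + 1) = some v) m m' :=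
      eqvGen_inv (f := fun v => π (v - 1)) (g := fun u => (π.symm u).map (· + 1))
        (hfgO π) hconn
    have := sink_unique (f := fun u => (π.symm u).map (· + 1)) (g := fun v => π (v - 1))
      (fun u v => (hfgO π v u).symm) (gO_none hm) (gO_none hm') hconn'
    rw [hbm, hbm', this]

lemma KCE {π : Fin p ≃. Fin p} {b : ZMod (2 * p)} (hb : Det π b) :
    ∃ a, Det π a ∧ EqvGen (ppRel p π) (a + 1) b := by
  rcases hb with ⟨m, hm, rfl⟩ | ⟨m, hm, rfl⟩
  · obtain ⟨v, hv, hE⟩ := exists_source (f := fun u => (π.symm u).map (· + 1))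
      (g := fun u => π (u - 1)) (fun u w => (hfgO π w u).symm) (gO_none hm)
    have hE' : EqvGen (rO π) m v :=
      eqvGen_inv (f := fun u => (π.symm u).map (· + 1)) (g := fun u => π (u - 1))
        (fun u w => (hfgO π w u).symm) hE
    refine ⟨evenEmb (v - 1), Or.inr ⟨v - 1, hv, rfl⟩, ?_⟩
    rw [evenEmb_add_one, sub_add_cancel]
    exact rO_to_pp π (EqvGen.symm _ _ hE')
  · obtain ⟨w, hw, hE⟩ := exists_source (f := fun u => π u) (g := fun u => π.symm u)
      (hfgE π) hm
    refine ⟨oddEmb w, Or.inl ⟨w, hw, rfl⟩, ?_⟩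
    rw [oddEmb_add_one]
    exact rE_to_pp π (EqvGen.symm _ _ hE)

lemma KCU {π : Fin p ≃. Fin p} {a a' b : ZMod (2 * p)} (ha : Det π a) (ha' : Det π a')
    (hb : Det π b) (h : EqvGen (ppRel p π) (a + 1) b)
    (h' : EqvGen (ppRel p π) (a' + 1) b) : a = a' := by
  rcases hb with ⟨m, hm, rfl⟩ | ⟨m, hm, rfl⟩
  · -- b = oddEmb m : a, a' are even-branch
    have key : ∀ a₁ : ZMod (2 * p), Det π a₁ → EqvGen (ppRel p π) (a₁ + 1) (oddEmb m) →
        ∃ j, π j = none ∧ a₁ = evenEmb j ∧ EqvGen (rO π) (j + 1) m := by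
      intro a₁ ha₁ h₁
      rcases ha₁ with ⟨j, hj, rfl⟩ | ⟨j, hj, rfl⟩
      · rw [oddEmb_add_one] at h₁
        obtain ⟨m0, hm0, -⟩ := (transport π h₁).1.1 j rfl
        exact absurd hm0.symm (evenEmb_ne_oddEmb m0 m)
      · rw [evenEmb_add_one] at h₁
        obtain ⟨m0, hm0, hE0⟩ := (transport π h₁).1.2 (j + 1) rfl
        rw [← oddEmb_inj hm0] at hE0
        exact ⟨j, hj, rfl, hE0⟩
    obtain ⟨j, hj, rfl, hE⟩ := key a ha h
    obtain ⟨j', hj', rfl, hE'⟩ := key a' ha' h'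
    have hs : π ((j + 1) - 1) = none := by rwa [add_sub_cancel_right]
    have hs' : π ((j' + 1) - 1) = none := by rwa [add_sub_cancel_right]
    have hconn : EqvGen (rO π) (j + 1) (j' + 1) :=
      EqvGen.trans _ _ _ hE (EqvGen.symm _ _ hE')
    have := sink_unique (f := fun v => π (v - 1)) (g := fun u => (π.symm u).map (· + 1))
      (hfgO π) hs hs' hconn
    rw [add_left_inj] at this
    rw [this]
  · -- b = evenEmb m : a, a' are odd-branch
    have key : ∀ a₁ : ZMod (2 * p), Det π a₁ → EqvGen (ppRel p π) (a₁ + 1) (evenEmb m) →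
        ∃ j, π.symm j = none ∧ a₁ = oddEmb j ∧ EqvGen (rE π) j m := by
      intro a₁ ha₁ h₁
      rcases ha₁ with ⟨j, hj, rfl⟩ | ⟨j, hj, rfl⟩
      · rw [oddEmb_add_one] at h₁
        obtain ⟨m0, hm0, hE0⟩ := (transport π h₁).1.1 j rfl
        rw [← evenEmb_inj hm0] at hE0
        exact ⟨j, hj, rfl, hE0⟩
      · rw [evenEmb_add_one] at h₁
        obtain ⟨m0, hm0, -⟩ := (transport π h₁).1.2 (j + 1) rfl
        exact absurd hm0 (evenEmb_ne_oddEmb m m0)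
    obtain ⟨j, hj, rfl, hE⟩ := key a ha h
    obtain ⟨j', hj', rfl, hE'⟩ := key a' ha' h'
    have hconn : EqvGen (rE π) j j' := EqvGen.trans _ _ _ hE (EqvGen.symm _ _ hE')
    have hconn' : EqvGen (fun u v => π.symm u = some v) j j' :=
      eqvGen_inv (f := fun u => π u) (g := fun u => π.symm u) (hfgE π) hconn
    have := sink_unique (f := fun u => π.symm u) (g := fun u => π u)
      (fun u v => (hfgE π v u).symm) hj hj' hconn'
    rw [this]


lemma eqvGen_parity {x y : ZMod (2 * p)} (h : EqvGen (ppRel p π) x y) :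
    x.val % 2 = y.val % 2 := by
  induction h with
  | rel a b hab => exact ppRel_parity π hab
  | refl a => rfl
  | symm a b _ ih => exact ih.symm
  | trans a b c _ _ ih1 ih2 => exact ih1.trans ih2

end PP



lemma ppMain {p : ℕ} [NeZero p] (π : Fin p ≃. Fin p) (a0 : ↥(ppDet p π)) :
    Even {x : ↥(ppDet p π) | EqvGen (ppSigmaRel p π) x a0}.ncard := by
  classical
  set C := {x : ↥(ppDet p π) | EqvGen (ppSigmaRel p π) x a0} with hC
  have hKE : ∀ x : ↥(ppDet p π), ∃ y : ↥(ppDet p π),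
      EqvGen (ppRel p π) ((x : ZMod (2 * p)) + 1) (y : ZMod (2 * p)) := by
    intro x
    obtain ⟨b, hbD, hb⟩ := KE (mem_ppDet.1 x.2)
    exact ⟨⟨b, mem_ppDet.2 hbD⟩, hb⟩
  choose s hs using hKE
  have hsrel : ∀ x : ↥(ppDet p π), EqvGen (ppSigmaRel p π) x (s x) :=
    fun x => EqvGen.rel _ _ (Or.inr (hs x))
  have hpar : ∀ x : ↥(ppDet p π),
      ((s x : ZMod (2 * p))).val % 2 = (((x : ZMod (2 * p))).val + 1) % 2 := by
    intro x
    have h1 := eqvGen_parity (hs x)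
    rw [val_add_one_mod_two] at h1
    exact h1.symm
  have hsinj : ∀ x y, s x = s y → x = y := by
    intro x y hxy
    apply Subtype.ext
    exact KCU (mem_ppDet.1 x.2) (mem_ppDet.1 y.2) (mem_ppDet.1 (s x).2) (hs x)
      (by rw [hxy]; exact hs y)
  have hssurj : ∀ y : ↥(ppDet p π), ∃ x, s x = y := by
    intro y
    obtain ⟨a, haD, ha⟩ := KCE (mem_ppDet.1 y.2)
    set x0 : ↥(ppDet p π) := ⟨a, mem_ppDet.2 haD⟩ with hx0
    refine ⟨x0, Subtype.ext ?_⟩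
    exact KU haD (mem_ppDet.1 (s x0).2) (mem_ppDet.1 y.2) (hs x0) ha
  set Cev := {x ∈ C | ((x : ZMod (2 * p))).val % 2 = 0} with hCev
  set Cod := {x ∈ C | ((x : ZMod (2 * p))).val % 2 = 1} with hCod
  have hUnion : C = Cev ∪ Cod := by
    ext x
    constructor
    · intro hx
      rcases Nat.mod_two_eq_zero_or_one ((x : ZMod (2 * p))).val with h | h
      · exact Or.inl ⟨hx, h⟩
      · exact Or.inr ⟨hx, h⟩
    · rintro (⟨hx, -⟩ | ⟨hx, -⟩) <;> exact hx
  have hdisj : Disjoint Cev Cod := by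
    rw [Set.disjoint_left]
    rintro x ⟨-, h0⟩ ⟨-, h1⟩
    omega
  have hbij : Set.BijOn s Cev Cod := by
    refine ⟨?_, ?_, ?_⟩
    · rintro x ⟨hxC, hx0⟩
      refine ⟨?_, ?_⟩
      · exact EqvGen.trans _ _ _ (EqvGen.symm _ _ (hsrel x)) hxC
      · have := hpar x; omega
    · intro x _ y _ hxy
      exact hsinj x y hxy
    · rintro y ⟨hyC, hy1⟩
      obtain ⟨x, rfl⟩ := hssurj y
      refine ⟨x, ⟨?_, ?_⟩, rfl⟩
      · exact EqvGen.trans _ _ _ (hsrel x) hyC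
      · have := hpar x; omega
  have h1 : Cev.ncard = Cod.ncard := by
    rw [← hbij.image_eq]
    exact (Set.ncard_image_of_injOn hbij.injOn).symm
  have h2 : C.ncard = Cev.ncard + Cod.ncard := by
    rw [hUnion]
    exact Set.ncard_union_eq hdisj (Set.toFinite _) (Set.toFinite _)
  exact ⟨Cev.ncard, by omega⟩

/-- For a partial permutation `π` of `{1,…,p}`, every equivalence class of
`σ(π)` (an equivalence relation on the deterministic set `𝒟`) has even cardinality. -/
theorem statement9 (p : ℕ) (hp : 0 < p) (π : Fin p ≃. Fin p) :
    ∀ C ∈ ppSigmaClasses p π, Even C.ncard := by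
  haveI : NeZero p := ⟨hp.ne'⟩
  intro C hC
  obtain ⟨a0, rfl⟩ := hC
  exact ppMain π a0
end
end

section
/- Let E be an N×N complex matrix and let π be a permutation of {1,…,p}. Then Σ_{y : {1,…,p} → {1,…,N}} ∏_{j=1}^p E(y(π^{−1}(j)), y(j)) = ∏_{C orbit of π} Tr(E^{|C|}), where the product is over the orbits (cycles, including fixed points) of π and Tr denotes the non-normalized trace. -/
open Matrix Relation

noncomputable section

/-- The orbits (cycles, including fixed points) of a permutation `π` of `{1,…,p}`: the
equivalence classes of the relation generated by `j ∼ π(j)`. -/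
def permOrbits {p : ℕ} (π : Equiv.Perm (Fin p)) : Set (Set (Fin p)) :=
  (EqvGen.setoid (fun a b : Fin p => π a = b)).classes
open Equiv Equiv.Perm Finset
set_option linter.unusedSectionVars false
noncomputable section
namespace Stmt10
variable {α : Type} [Fintype α] [DecidableEq α]

open scoped Classical in
/-- The orbit of `a` under `π` as a `Finset`. -/
def orbF (π : Perm α) (a : α) : Finset α := univ.filter (π.SameCycle a)

open scoped Classical in
lemma mem_orbF {π : Perm α} {a b : α} : b ∈ orbF π a ↔ π.SameCycle a b := by
  simp [orbF]

/-- The set of orbits of `π` as a `Finset` of `Finset`s. -/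
def orbs (π : Perm α) : Finset (Finset α) := univ.image (orbF π)

lemma sameCycle_iff_nat (π : Perm α) {x y : α} : π.SameCycle x y ↔ ∃ n : ℕ, (π ^ n) x = y := by
  constructor
  · intro h
    obtain ⟨i, -, hi⟩ := h.exists_pow_eq'
    exact ⟨i, hi⟩
  · rintro ⟨n, h⟩
    exact ⟨n, by simpa using h⟩

lemma orbF_eq_of_sameCycle {π : Perm α} {a b : α} (h : π.SameCycle a b) :
    orbF π a = orbF π b := by
  ext c; simp only [mem_orbF]
  exact ⟨fun hc => h.symm.trans hc, fun hc => h.trans hc⟩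

lemma mem_orbF_self (π : Perm α) (a : α) : a ∈ orbF π a := mem_orbF.2 (Equiv.Perm.SameCycle.refl _ _)

lemma pow_fixed {σ : Perm α} {a : α} (ha : σ a = a) (n : ℕ) : (σ ^ n) a = a := by
  induction n with
  | zero => rfl
  | succ n ih => rw [pow_succ', Perm.mul_apply, ih, ha]

lemma sameCycle_fixed {σ : Perm α} {a : α} (ha : σ a = a) {y : α} (h : σ.SameCycle a y) : y = a := by
  obtain ⟨n, rfl⟩ := (sameCycle_iff_nat σ).1 h
  exact pow_fixed ha n

lemma orbF_fixed {σ : Perm α} {a : α} (ha : σ a = a) : orbF σ a = {a} := by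
  ext b
  simp only [mem_orbF, Finset.mem_singleton]
  exact ⟨fun h => sameCycle_fixed ha h, fun h => h ▸ Equiv.Perm.SameCycle.refl _ _⟩

section contract
variable {π : Perm α} {a : α}

lemma pow_ne_fixed {σ : Perm α} (ha : σ a = a) {x : α} (hx : x ≠ a) (n : ℕ) : (σ ^ n) x ≠ a := by
  intro h
  exact hx ((σ ^ n).injective (h.trans (pow_fixed ha n).symm))

lemma swap_mul_fixed (ha : π a ≠ a) : (Equiv.swap a (π a) * π) a = a := by
  simp [Perm.mul_apply, Equiv.swap_apply_right]

lemma swap_mul_apply_of_ne (ha : π a ≠ a) {x : α} (hx : x ≠ a) :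
    (Equiv.swap a (π a) * π) x = if π x = a then π a else π x := by
  rw [Perm.mul_apply]
  split_ifs with h
  · rw [h, Equiv.swap_apply_left]
  · refine Equiv.swap_apply_of_ne_of_ne h ?_
    intro hb
    exact hx (π.injective hb)

lemma pow_apply_succ (σ : Perm α) (n : ℕ) (x : α) : (σ ^ (n+1)) x = σ ((σ ^ n) x) := by
  rw [pow_succ', Perm.mul_apply]

lemma pow_apply_succ' (σ : Perm α) (n : ℕ) (x : α) : (σ ^ (n+1)) x = (σ ^ n) (σ x) := by
  rw [pow_succ, Perm.mul_apply]

/-- Claim A: σ-trajectories from `x ≠ a` are π-reachable. -/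
lemma claimA (ha : π a ≠ a) {x : α} (hx : x ≠ a) (n : ℕ) :
    ∃ m : ℕ, (π ^ m) x = ((Equiv.swap a (π a) * π) ^ n) x := by
  set σ := Equiv.swap a (π a) * π with hσ
  induction n with
  | zero => exact ⟨0, rfl⟩
  | succ n ih =>
    obtain ⟨m, hm⟩ := ih
    have hz : (π ^ m) x ≠ a := by rw [hm]; exact pow_ne_fixed (swap_mul_fixed ha) hx n
    rw [pow_apply_succ, ← hm, swap_mul_apply_of_ne ha hz]
    split_ifs with h
    · exact ⟨m + 2, by rw [show m + 2 = (m+1)+1 from rfl, pow_apply_succ, pow_apply_succ, h]⟩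
    · exact ⟨m + 1, by rw [pow_apply_succ]⟩

/-- Claim B: π-trajectories from `x ≠ a` are σ-reachable, skipping `a`. -/
lemma claimB (ha : π a ≠ a) {x : α} (hx : x ≠ a) (n : ℕ) :
    ∃ m : ℕ, ((Equiv.swap a (π a) * π) ^ m) x = if (π ^ n) x = a then π a else (π ^ n) x := by
  set σ := Equiv.swap a (π a) * π with hσ
  induction n with
  | zero => exact ⟨0, by simp [hx]⟩
  | succ n ih =>
    obtain ⟨m, hm⟩ := ih
    by_cases h : (π ^ n) x = a
    · rw [if_pos h] at hm
      have h1 : (π ^ (n+1)) x = π a := by rw [pow_apply_succ, h]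
      rw [h1, if_neg ha]
      exact ⟨m, hm⟩
    · rw [if_neg h] at hm
      refine ⟨m + 1, ?_⟩
      rw [pow_apply_succ σ m x, hm, swap_mul_apply_of_ne ha h, pow_apply_succ π n x]

lemma sameCycle_contract (ha : π a ≠ a) {x y : α} (hx : x ≠ a) (hy : y ≠ a) :
    (Equiv.swap a (π a) * π).SameCycle x y ↔ π.SameCycle x y := by
  constructor
  · intro h
    obtain ⟨n, hn⟩ := (sameCycle_iff_nat _).1 h
    obtain ⟨m, hm⟩ := claimA ha hx n
    exact (sameCycle_iff_nat _).2 ⟨m, hm.trans hn⟩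
  · intro h
    obtain ⟨n, hn⟩ := (sameCycle_iff_nat _).1 h
    obtain ⟨m, hm⟩ := claimB ha hx n
    rw [hn, if_neg hy] at hm
    exact (sameCycle_iff_nat _).2 ⟨m, hm⟩

lemma sameCycle_contract_apply (ha : π a ≠ a) {y : α} (hy : y ≠ a) :
    π.SameCycle a y ↔ (Equiv.swap a (π a) * π).SameCycle (π a) y := by
  constructor
  · intro h
    obtain ⟨n, hn⟩ := (sameCycle_iff_nat _).1 h
    rcases n with _ | n
    · exact absurd hn.symm hy
    · have hn' : (π ^ n) (π a) = y := (pow_apply_succ' π n a).symm.trans hn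
      obtain ⟨m, hm⟩ := claimB ha ha n
      rw [hn', if_neg hy] at hm
      exact (sameCycle_iff_nat _).2 ⟨m, hm⟩
  · intro h
    obtain ⟨n, hn⟩ := (sameCycle_iff_nat _).1 h
    obtain ⟨m, hm⟩ := claimA ha ha n
    exact (sameCycle_iff_nat _).2 ⟨m + 1, (pow_apply_succ' π m a).trans (hm.trans hn)⟩

end contract

section structure_lemmas
variable {σ : Perm α} {a : α}

lemma ne_iff_of_fixed (ha : σ a = a) : ∀ x, σ x ≠ a ↔ x ≠ a := by
  intro x
  constructor
  · intro h hx
    exact h (hx ▸ ha)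
  · intro hx h
    exact hx (σ.injective (h.trans ha.symm))

lemma sameCycle_subtypePerm (h : ∀ x, σ x ≠ a ↔ x ≠ a) (x y : {x : α // x ≠ a}) :
    ((σ.subtypePerm (p := fun x => x ≠ a) h).SameCycle x y) ↔ σ.SameCycle ↑x ↑y := by
  apply exists_congr; intro i
  rw [Equiv.Perm.subtypePerm_zpow, Subtype.ext_iff]
  simp

lemma orbF_subtype (ha : σ a = a) (h : ∀ x, σ x ≠ a ↔ x ≠ a) (x : {x : α // x ≠ a}) :
    (orbF (σ.subtypePerm (p := fun x => x ≠ a) h) x).image Subtype.val = orbF σ ↑x := by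
  ext b
  simp only [Finset.mem_image, mem_orbF]
  constructor
  · rintro ⟨b', hb', rfl⟩
    exact (sameCycle_subtypePerm h x b').1 hb'
  · intro hb
    have hbne : b ≠ a := by rintro rfl; exact x.2 (sameCycle_fixed ha hb.symm)
    exact ⟨⟨b, hbne⟩, (sameCycle_subtypePerm h x ⟨b, hbne⟩).2 hb, rfl⟩

lemma orbs_fixed (ha : σ a = a) (h : ∀ x, σ x ≠ a ↔ x ≠ a) :
    orbs σ = insert {a} ((orbs (σ.subtypePerm (p := fun x => x ≠ a) h)).image (Finset.image Subtype.val)) := by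
  ext C
  simp only [orbs, Finset.mem_image, Finset.mem_insert, Finset.mem_image, mem_univ,
    true_and, exists_exists_eq_and]
  constructor
  · rintro ⟨x, rfl⟩
    by_cases hx : x = a
    · subst hx; left; exact orbF_fixed ha
    · right; exact ⟨⟨x, hx⟩, orbF_subtype ha h ⟨x, hx⟩⟩
  · rintro (rfl | ⟨x, rfl⟩)
    · exact ⟨a, orbF_fixed ha⟩
    · exact ⟨↑x, (orbF_subtype ha h x).symm⟩

lemma singleton_not_mem_image_val (h : ∀ x, σ x ≠ a ↔ x ≠ a) :
    ({a} : Finset α) ∉ (orbs (σ.subtypePerm (p := fun x => x ≠ a) h)).image (Finset.image Subtype.val) := by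
  simp only [Finset.mem_image]
  rintro ⟨C, hC, hCa⟩
  simp only [orbs, Finset.mem_image] at hC
  obtain ⟨x, rfl⟩ := hC.imp (fun x h => h.2)
  have := Finset.mem_image_of_mem Subtype.val (mem_orbF_self (σ.subtypePerm (p := fun x => x ≠ a) h) x)
  rw [hCa] at this
  exact x.2 (Finset.mem_singleton.1 this)

lemma prod_orbs_fixed (ha : σ a = a) (h : ∀ x, σ x ≠ a ↔ x ≠ a) (f : Finset α → ℂ) :
    ∏ C ∈ orbs σ, f C
      = f {a} * ∏ C ∈ orbs (σ.subtypePerm (p := fun x => x ≠ a) h), f (C.image Subtype.val) := by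
  rw [orbs_fixed ha h, Finset.prod_insert (singleton_not_mem_image_val h),
    Finset.prod_image]
  intro x _ y _ hxy
  exact Finset.image_injective Subtype.val_injective hxy

end structure_lemmas

section contract2
variable {π : Perm α} {a : α}

lemma orbF_contract (ha : π a ≠ a) {x : α} (hx : x ≠ a) :
    orbF (Equiv.swap a (π a) * π) x = (orbF π x).erase a := by
  ext b
  simp only [mem_orbF, Finset.mem_erase]
  constructor
  · intro hb
    have hbne : b ≠ a := by
      rintro rfl
      exact hx (sameCycle_fixed (swap_mul_fixed ha) hb.symm)
    exact ⟨hbne, (sameCycle_contract ha hx hbne).1 hb⟩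
  · rintro ⟨hbne, hb⟩
    exact (sameCycle_contract ha hx hbne).2 hb

lemma orbF_contract_apply (ha : π a ≠ a) :
    orbF (Equiv.swap a (π a) * π) (π a) = (orbF π a).erase a := by
  ext b
  simp only [mem_orbF, Finset.mem_erase]
  constructor
  · intro hb
    have hbne : b ≠ a := by
      rintro rfl
      exact ha (sameCycle_fixed (swap_mul_fixed ha) hb.symm)
    exact ⟨hbne, (sameCycle_contract_apply ha hbne).2 hb⟩
  · rintro ⟨hbne, hb⟩
    exact (sameCycle_contract_apply ha hbne).1 hb

lemma sameCycle_self_apply (π : Perm α) (x : α) : π.SameCycle x (π x) := ⟨1, by simp⟩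

lemma orbF_eq_of_mem {x c : α} (h : c ∈ orbF π x) : orbF π x = orbF π c :=
  orbF_eq_of_sameCycle (mem_orbF.1 h)

lemma erase_injOn_orbs (ha : π a ≠ a) :
    ∀ C₁ ∈ orbs π, ∀ C₂ ∈ orbs π, C₁.erase a = C₂.erase a → C₁ = C₂ := by
  have key : ∀ C₁ ∈ orbs π, ∀ C₂ ∈ orbs π, a ∈ C₁ → a ∉ C₂ → C₁.erase a = C₂.erase a → False := by
    rintro C₁ h₁ C₂ h₂ haC₁ haC₂ he
    simp only [orbs, Finset.mem_image] at h₁ h₂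
    obtain ⟨x, -, rfl⟩ := h₁
    obtain ⟨y, -, rfl⟩ := h₂
    have hC₁ : orbF π x = orbF π a := orbF_eq_of_mem haC₁
    have hπa : π a ∈ (orbF π x).erase a := by
      rw [hC₁]
      exact Finset.mem_erase.2 ⟨ha, mem_orbF.2 (sameCycle_self_apply π a)⟩
    rw [he, Finset.erase_eq_of_notMem haC₂] at hπa
    have : orbF π y = orbF π (π a) := orbF_eq_of_mem hπa
    rw [this, ← orbF_eq_of_sameCycle (sameCycle_self_apply π a)] at haC₂
    exact haC₂ (mem_orbF_self π a)
  intro C₁ h₁ C₂ h₂ he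
  by_cases ha₁ : a ∈ C₁ <;> by_cases ha₂ : a ∈ C₂
  · simp only [orbs, Finset.mem_image] at h₁ h₂
    obtain ⟨x, -, rfl⟩ := h₁
    obtain ⟨y, -, rfl⟩ := h₂
    rw [orbF_eq_of_mem ha₁, orbF_eq_of_mem ha₂]
  · exact absurd he (fun h => key C₁ h₁ C₂ h₂ ha₁ ha₂ h)
  · exact absurd he.symm (fun h => key C₂ h₂ C₁ h₁ ha₂ ha₁ h)
  · rwa [Finset.erase_eq_of_notMem ha₁, Finset.erase_eq_of_notMem ha₂] at he

lemma orbs_contract (ha : π a ≠ a) :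
    orbs (Equiv.swap a (π a) * π) = insert {a} ((orbs π).image (fun C => C.erase a)) := by
  ext C
  simp only [orbs, Finset.mem_image, Finset.mem_insert, mem_univ, true_and,
    exists_exists_eq_and]
  constructor
  · rintro ⟨x, rfl⟩
    by_cases hx : x = a
    · subst hx; left; exact orbF_fixed (swap_mul_fixed ha)
    · right; exact ⟨x, (orbF_contract ha hx).symm ▸ rfl⟩
  · rintro (rfl | ⟨x, rfl⟩)
    · exact ⟨a, orbF_fixed (swap_mul_fixed ha)⟩
    · by_cases hax : a ∈ orbF π x
      · refine ⟨π a, ?_⟩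
        rw [orbF_contract_apply ha, orbF_eq_of_mem hax]
      · have hx : x ≠ a := fun h => hax (h ▸ mem_orbF_self π x)
        exact ⟨x, by rw [orbF_contract ha hx]⟩

lemma singleton_not_mem_erase_image (ha : π a ≠ a) :
    ({a} : Finset α) ∉ (orbs π).image (fun C => C.erase a) := by
  simp only [Finset.mem_image]
  rintro ⟨C, -, hC⟩
  have : a ∈ C.erase a := hC.symm ▸ Finset.mem_singleton_self a
  exact (Finset.notMem_erase a C) this

end contract2

section lhs
variable {N : ℕ} (E : Matrix (Fin N) (Fin N) ℂ)
variable {π : Perm α} {a : α}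

lemma lhs_fixed (ha : π a = a) (e : α → ℕ) :
    ∑ y : α → Fin N, ∏ j, (E ^ e j) (y (π⁻¹ j)) (y j)
      = Matrix.trace (E ^ e a) *
        ∑ y : {x : α // x ≠ a} → Fin N, ∏ j : {x : α // x ≠ a},
          (E ^ e ↑j) (y ((π.subtypePerm (p := fun x => x ≠ a) (ne_iff_of_fixed ha))⁻¹ j)) (y j) := by
  have hπa : π⁻¹ a = a := by rw [Equiv.Perm.inv_eq_iff_eq, ha]
  rw [← Equiv.sum_comp (Equiv.funSplitAt a (Fin N)).symm, Fintype.sum_prod_type,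
    Matrix.trace, Fintype.sum_mul_sum]
  refine Finset.sum_congr rfl fun v _ => Finset.sum_congr rfl fun y' _ => ?_
  rw [← Finset.mul_prod_erase Finset.univ _ (Finset.mem_univ a)]
  congr 1
  · simp [hπa, Matrix.diag]
  · rw [Finset.prod_subtype (Finset.univ.erase a)
      (p := fun x => x ≠ a) (by simp)]
    refine Finset.prod_congr rfl fun j _ => ?_
    have h1 : π⁻¹ ↑j ≠ a := by
      rw [Ne, Equiv.Perm.inv_eq_iff_eq, ha]
      exact j.2
    simp [show π.symm ↑j ≠ a from h1, j.2]

lemma lhs_contract (ha : π a ≠ a) (e : α → ℕ) :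
    ∑ y : α → Fin N, ∏ j, (E ^ e j) (y (π⁻¹ j)) (y j)
      = ∑ y : {x : α // x ≠ a} → Fin N, ∏ j : {x : α // x ≠ a},
          (E ^ (if (j : α) = π a then e a + e (π a) else e ↑j))
            (y (((Equiv.swap a (π a) * π).subtypePerm (p := fun x => x ≠ a)
                (ne_iff_of_fixed (swap_mul_fixed ha)))⁻¹ j)) (y j) := by
  set σ := Equiv.swap a (π a) * π with hσdef
  set σ' := σ.subtypePerm (p := fun x => x ≠ a) (ne_iff_of_fixed (swap_mul_fixed ha)) with hσ'def
  have hb : π a ≠ a := ha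
  have hπinva : π⁻¹ a ≠ a := by
    rw [Ne, Equiv.Perm.inv_eq_iff_eq]
    exact fun h => ha h.symm
  have hπinvb : π⁻¹ (π a) = a := by simp
  have hinv : ∀ (x y : {x : α // x ≠ a}), σ ↑x = ↑y → σ'⁻¹ y = x := by
    intro x y hxy
    rw [Equiv.Perm.inv_eq_iff_eq]
    exact Subtype.ext hxy.symm
  have hstep : ∀ (y' : {x : α // x ≠ a} → Fin N) (v : Fin N),
      (∏ j : α, (E ^ e j) ((Equiv.funSplitAt a (Fin N)).symm (v, y') (π⁻¹ j))
          ((Equiv.funSplitAt a (Fin N)).symm (v, y') j))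
        = ((E ^ e a) (y' ⟨π⁻¹ a, hπinva⟩) v * (E ^ e (π a)) v (y' ⟨π a, hb⟩)) *
          ∏ j ∈ Finset.univ.erase (⟨π a, hb⟩ : {x : α // x ≠ a}),
            (E ^ (if (j : α) = π a then e a + e (π a) else e ↑j))
              (y' (σ'⁻¹ j)) (y' j) := by
    intro y' v
    have hbmem : π a ∈ Finset.univ.erase a := Finset.mem_erase.2 ⟨hb, Finset.mem_univ _⟩
    rw [← Finset.mul_prod_erase Finset.univ _ (Finset.mem_univ a),
      ← Finset.mul_prod_erase _ _ hbmem, ← mul_assoc]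
    congr 1
    · congr 1
      · simp [show π.symm a ≠ a from hπinva]
      · simp [hπinvb, hb]
    · refine Finset.prod_bij (fun (j : α) (hj : j ∈ (Finset.univ.erase a).erase (π a)) =>
        (⟨j, (Finset.mem_erase.1 (Finset.mem_erase.1 hj).2).1⟩ : {x : α // x ≠ a})) ?_ ?_ ?_ ?_
      · intro j hj
        simp only [Finset.mem_erase, Finset.mem_univ, and_true] at hj ⊢
        exact fun h => hj.1 (congrArg Subtype.val h)
      · intro j₁ h₁ j₂ h₂ h
        exact congrArg Subtype.val h
      · rintro ⟨j, hja⟩ hmem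
        simp only [Finset.mem_erase, Finset.mem_univ, and_true] at hmem
        refine ⟨j, ?_, rfl⟩
        simp only [Finset.mem_erase, Finset.mem_univ, and_true]
        exact ⟨fun h => hmem (Subtype.ext h), hja⟩
      · intro j hj
        obtain ⟨hjb, hja'⟩ := Finset.mem_erase.1 hj
        have hja : j ≠ a := (Finset.mem_erase.1 hja').1
        have hπinvj : π⁻¹ j ≠ a := by
          rw [Ne, Equiv.Perm.inv_eq_iff_eq]
          exact fun h => hjb h
        have h1 : σ (π⁻¹ j) = j := by
          rw [hσdef, Equiv.Perm.mul_apply, Equiv.Perm.inv_def, Equiv.apply_symm_apply]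
          exact Equiv.swap_apply_of_ne_of_ne hja hjb
        have h2 : σ'⁻¹ ⟨j, hja⟩ = ⟨π⁻¹ j, hπinvj⟩ := hinv _ _ h1
        rw [if_neg hjb, h2]
        simp [show π.symm j ≠ a from hπinvj, hja]
  rw [← Equiv.sum_comp (Equiv.funSplitAt a (Fin N)).symm, Fintype.sum_prod_type,
    Finset.sum_comm]
  refine Finset.sum_congr rfl fun y' _ => ?_
  conv_lhs =>
    enter [2, v]
    rw [hstep y' v]
  rw [← Finset.sum_mul,
    ← Finset.mul_prod_erase Finset.univ _ (Finset.mem_univ (⟨π a, hb⟩ : {x : α // x ≠ a}))]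
  congr 1
  have h1 : σ (π⁻¹ a) = π a := by
    rw [hσdef, Equiv.Perm.mul_apply, Equiv.Perm.inv_def, Equiv.apply_symm_apply, Equiv.swap_apply_left]
  have h2 : σ'⁻¹ ⟨π a, hb⟩ = ⟨π⁻¹ a, hπinva⟩ := hinv _ _ h1
  rw [if_pos rfl, h2, pow_add, Matrix.mul_apply]
end lhs

section rhs
variable {π : Perm α} {a : α} {M : Type} [CommMonoid M]

/-- Case 1 RHS: product over orbits when `a` is a fixed point. -/
lemma rhs_fixed (ha : π a = a) (e : α → ℕ) (f : ℕ → ℂ) :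
    ∏ C ∈ orbs π, f (∑ j ∈ C, e j)
      = f (e a) * ∏ C ∈ orbs (π.subtypePerm (p := fun x => x ≠ a) (ne_iff_of_fixed ha)),
          f (∑ j ∈ C, e ↑j) := by
  rw [prod_orbs_fixed ha (ne_iff_of_fixed ha) (fun C => f (∑ j ∈ C, e j))]
  congr 1
  refine Finset.prod_congr rfl fun C _ => ?_
  rw [Finset.sum_image (fun x _ y _ h => Subtype.val_injective h)]

/-- The modified exponent function used in contraction. -/
def emod (π : Perm α) (a : α) (e : α → ℕ) : α → ℕ :=
  fun j => if j = π a then e a + e (π a) else if j = a then 0 else e j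

lemma sum_emod_erase (ha : π a ≠ a) (e : α → ℕ) {C : Finset α} (hC : C ∈ orbs π) :
    ∑ j ∈ C.erase a, emod π a e j = ∑ j ∈ C, e j := by
  by_cases haC : a ∈ C
  · obtain ⟨x, -, rfl⟩ := Finset.mem_image.1 hC
    rw [orbF_eq_of_mem haC] at *
    have hπaC : π a ∈ (orbF π a).erase a :=
      Finset.mem_erase.2 ⟨ha, mem_orbF.2 (sameCycle_self_apply π a)⟩
    rw [← Finset.add_sum_erase _ (emod π a e) hπaC,
      ← Finset.add_sum_erase _ e haC,
      ← Finset.add_sum_erase _ e hπaC, ← add_assoc]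
    congr 1
    · show (if π a = π a then e a + e (π a) else _) = e a + e (π a)
      rw [if_pos rfl]
    · refine Finset.sum_congr rfl fun j hj => ?_
      obtain ⟨hjb, hj'⟩ := Finset.mem_erase.1 hj
      obtain ⟨hja, -⟩ := Finset.mem_erase.1 hj'
      show (if j = π a then _ else if j = a then _ else e j) = e j
      rw [if_neg hjb, if_neg hja]
  · obtain ⟨x, -, rfl⟩ := Finset.mem_image.1 hC
    have hπaC : π a ∉ orbF π x := by
      intro hmem
      exact haC (mem_orbF.2 ((mem_orbF.1 hmem).trans (sameCycle_self_apply π a).symm))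
    rw [Finset.erase_eq_of_notMem haC]
    refine Finset.sum_congr rfl fun j hj => ?_
    have hja : j ≠ a := fun h => haC (h ▸ hj)
    have hjb : j ≠ π a := fun h => hπaC (h ▸ hj)
    show (if j = π a then _ else if j = a then _ else e j) = e j
    rw [if_neg hjb, if_neg hja]

lemma image_erase_eq (ha : π a ≠ a) :
    (orbs π).image (fun C => C.erase a)
      = (orbs ((Equiv.swap a (π a) * π).subtypePerm (p := fun x => x ≠ a)
          (ne_iff_of_fixed (swap_mul_fixed ha)))).image (Finset.image Subtype.val) := by
  have h1 : insert ({a} : Finset α) ((orbs π).image (fun C => C.erase a))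
      = insert {a} ((orbs ((Equiv.swap a (π a) * π).subtypePerm (p := fun x => x ≠ a)
          (ne_iff_of_fixed (swap_mul_fixed ha)))).image (Finset.image Subtype.val)) := by
    rw [← orbs_contract ha, orbs_fixed (swap_mul_fixed ha)]
  have hX := singleton_not_mem_erase_image ha
  have hY := singleton_not_mem_image_val (σ := Equiv.swap a (π a) * π)
    (ne_iff_of_fixed (swap_mul_fixed ha))
  ext D
  constructor
  · intro hD
    have : D ∈ insert ({a} : Finset α) _ := h1 ▸ Finset.mem_insert_of_mem hD
    rcases Finset.mem_insert.1 this with rfl | h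
    · exact absurd hD hX
    · exact h
  · intro hD
    have : D ∈ insert ({a} : Finset α) ((orbs π).image (fun C => C.erase a)) := by
      rw [h1]; exact Finset.mem_insert_of_mem hD
    rcases Finset.mem_insert.1 this with rfl | h
    · exact absurd hD hY
    · exact h

/-- Case 2 RHS: product over orbits under contraction. -/
lemma rhs_contract (ha : π a ≠ a) (e : α → ℕ) (f : ℕ → ℂ) :
    ∏ C ∈ orbs π, f (∑ j ∈ C, e j)
      = ∏ C ∈ orbs ((Equiv.swap a (π a) * π).subtypePerm (p := fun x => x ≠ a)
          (ne_iff_of_fixed (swap_mul_fixed ha))),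
          f (∑ j ∈ C, emod π a e ↑j) := by
  have step1 : ∏ C ∈ orbs π, f (∑ j ∈ C, e j)
      = ∏ C ∈ orbs π, f (∑ j ∈ C.erase a, emod π a e j) :=
    Finset.prod_congr rfl fun C hC => by rw [sum_emod_erase ha e hC]
  rw [step1, ← Finset.prod_image (erase_injOn_orbs ha) (f := fun D => f (∑ j ∈ D, emod π a e j)),
    image_erase_eq ha, Finset.prod_image
      (fun x _ y _ h => Finset.image_injective Subtype.val_injective h)]
  refine Finset.prod_congr rfl fun C _ => ?_
  rw [Finset.sum_image (fun x _ y _ h => Subtype.val_injective h)]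

end rhs

lemma card_ne_aux (a : α) : Fintype.card {x : α // x ≠ a} = Fintype.card α - 1 := by
  have : Fintype.card {x : α // ¬ x = a} = Fintype.card α - Fintype.card {x : α // x = a} :=
    Fintype.card_subtype_compl (fun x => x = a)
  rwa [Fintype.card_subtype_eq] at this

lemma main {N : ℕ} (E : Matrix (Fin N) (Fin N) ℂ) :
    ∀ (n : ℕ) (α : Type) [Fintype α] [DecidableEq α] (π : Perm α) (e : α → ℕ),
      Fintype.card α = n →
      ∑ y : α → Fin N, ∏ j, (E ^ e j) (y (π⁻¹ j)) (y j)
        = ∏ C ∈ orbs π, Matrix.trace (E ^ ∑ j ∈ C, e j) := by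
  intro n
  induction n using Nat.strong_induction_on with
  | _ n IH =>
    intro α _ _ π e hcard
    rcases Nat.eq_zero_or_pos n with rfl | hn
    · have : IsEmpty α := Fintype.card_eq_zero_iff.1 hcard
      rw [Finset.univ_eq_empty (α := α)]
      simp [orbs]
    · have : Nonempty α := Fintype.card_pos_iff.1 (hcard ▸ hn)
      obtain ⟨a⟩ := this
      have hcard' : Fintype.card {x : α // x ≠ a} = n - 1 := by
        rw [card_ne_aux a, hcard]
      have hlt : n - 1 < n := Nat.sub_lt hn Nat.one_pos
      by_cases hfix : π a = a
      · rw [lhs_fixed E hfix e, rhs_fixed hfix e (fun k => Matrix.trace (E ^ k))]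
        congr 1
        exact IH (n - 1) hlt _ (π.subtypePerm (p := fun x => x ≠ a) (ne_iff_of_fixed hfix))
          (fun j => e ↑j) hcard'
      · rw [lhs_contract E hfix e, rhs_contract hfix e (fun k => Matrix.trace (E ^ k))]
        have hpe : ∀ (j : {x : α // x ≠ a}),
            (if (j : α) = π a then e a + e (π a) else e ↑j) = emod π a e ↑j := by
          intro j
          by_cases h : (j : α) = π a
          · rw [if_pos h]; unfold emod; rw [if_pos h]
          · rw [if_neg h]; unfold emod; rw [if_neg h, if_neg j.2]
        have := IH (n - 1) hlt _ ((Equiv.swap a (π a) * π).subtypePerm (p := fun x => x ≠ a)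
          (ne_iff_of_fixed (swap_mul_fixed hfix)))
          (fun j => emod π a e ↑j) hcard'
        rw [← this]
        refine Finset.sum_congr rfl fun y _ => Finset.prod_congr rfl fun j _ => ?_
        rw [hpe j]

lemma eqvGen_iff_sameCycle (π : Perm α) (x y : α) :
    Relation.EqvGen (fun a b => π a = b) x y ↔ π.SameCycle x y := by
  constructor
  · intro h
    induction h with
    | rel a b hab => exact ⟨1, by simp [hab]⟩
    | refl a => exact Equiv.Perm.SameCycle.refl _ _
    | symm a b _ ih => exact ih.symm
    | trans a b c _ _ ih₁ ih₂ => exact ih₁.trans ih₂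
  · intro h
    obtain ⟨n, rfl⟩ := (sameCycle_iff_nat π).1 h
    clear h
    induction n with
    | zero => exact Relation.EqvGen.refl x
    | succ n ih =>
      refine Relation.EqvGen.trans _ _ _ ih (Relation.EqvGen.rel _ _ ?_)
      exact (pow_apply_succ π n x).symm

end Stmt10


/-- For an `N×N` complex matrix `E` and a permutation `π` of `{1,…,p}`,
`Σ_{y : {1,…,p} → {1,…,N}} ∏_j E(y(π⁻¹(j)), y(j)) = ∏_{C orbit of π} Tr(E^{|C|})`. -/
theorem statement10 {N p : ℕ} (E : Matrix (Fin N) (Fin N) ℂ) (π : Equiv.Perm (Fin p)) :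
    ∑ y : Fin p → Fin N, ∏ j : Fin p, E (y (π.symm j)) (y j) =
      ∏ᶠ C ∈ permOrbits π, Matrix.trace (E ^ C.ncard) := by
  classical
  have h1 : ∑ y : Fin p → Fin N, ∏ j : Fin p, E (y (π.symm j)) (y j)
      = ∑ y : Fin p → Fin N, ∏ j : Fin p, (E ^ (1 : ℕ)) (y (π⁻¹ j)) (y j) := by
    simp [pow_one, Equiv.Perm.inv_def]
  rw [h1, Stmt10.main E (Fintype.card (Fin p)) (Fin p) π (fun _ => 1) rfl]
  have h2 : permOrbits π
      = ↑(((Stmt10.orbs π).image (fun C : Finset (Fin p) => (SetLike.coe C : Set (Fin p))) : Finset (Set (Fin p)))) := by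
    ext S
    simp only [permOrbits, Setoid.classes, Set.mem_setOf_eq, Finset.coe_image,
      Set.mem_image, Finset.mem_coe]
    constructor
    · rintro ⟨y, rfl⟩
      refine ⟨Stmt10.orbF π y, Finset.mem_image_of_mem _ (Finset.mem_univ y), ?_⟩
      ext x
      simp only [Finset.coe_filter, Set.mem_setOf_eq, Stmt10.mem_orbF, Finset.mem_coe]
      exact ⟨fun h => (Stmt10.eqvGen_iff_sameCycle π x y).2 h.symm,
        fun h => ((Stmt10.eqvGen_iff_sameCycle π x y).1 h).symm⟩
    · rintro ⟨C, hC, rfl⟩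
      simp only [Stmt10.orbs, Finset.mem_image, Finset.mem_univ, true_and] at hC
      obtain ⟨y, rfl⟩ := hC
      refine ⟨y, ?_⟩
      ext x
      simp only [Finset.mem_coe, Stmt10.mem_orbF, Set.mem_setOf_eq]
      exact ⟨fun h => (Stmt10.eqvGen_iff_sameCycle π x y).2 h.symm,
        fun h => ((Stmt10.eqvGen_iff_sameCycle π x y).1 h).symm⟩
  rw [h2, finprod_mem_coe_finset,
    Finset.prod_image (fun x _ y _ h => Finset.coe_injective h)]
  refine Finset.prod_congr rfl fun C _ => ?_
  rw [Set.ncard_coe_finset, Finset.sum_const, smul_eq_mul, mul_one]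
end
end
end
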